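/- Let n ≥ 2, let T = (T_{ab}^c) be a torsion-type tensor and C = (C_{j;i}) a real n×n matrix. Then T satisfies all n compatibility equations (Σ_{a<b, c} σ_{ab;i}^c(y)·T_{ab}^c = 2·Σ_j C_{j;i}·y_j for all y ∈ ℝⁿ and all i ∈ {1,…,n}) if and only if the following hold: C_{n;i} = 0 for all i ∈ {1,…,n}; T_{an}^n = C_{a;n} for all a < n; T_{an}^a = C_{a;a} for all a < n; T_{ab}^n = C_{a;b} − C_{b;a} for all a < b < n; and T_{an}^c + T_{cn}^a = C_{a;c} + C_{c;a} for all a ≠ c with a, c < n. In particular the components T_{ab}^c with a < b < n and c < n are unconstrained. -/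

import Mathlib

open Finset

/-- The last index `n` of `{1,…,n}`, realized as the final element of `Fin n`. -/
def lastIdx (n : ℕ) (hn : 1 ≤ n) : Fin n := ⟨n - 1, by omega⟩

/-- The coefficient `σ_{ab;i}^c(y) = (δᵢᶜyₐ + δᵢᵃy_c)δ_bⁿ + (δᵢᵇyₐ − δᵢᵃy_b)δ_cⁿ` of the
torsion component `T_{ab}^c` in the `i`-th compatibility equation of a Randers metric. -/
noncomputable def sigma (n : ℕ) (hn : 1 ≤ n) (a b c i : Fin n) (y : Fin n → ℝ) : ℝ :=
  ((if i = c then (1 : ℝ) else 0) * y a + (if i = a then (1 : ℝ) else 0) * y c) *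
      (if b = lastIdx n hn then (1 : ℝ) else 0) +
    ((if i = b then (1 : ℝ) else 0) * y a - (if i = a then (1 : ℝ) else 0) * y b) *
      (if c = lastIdx n hn then (1 : ℝ) else 0)

/-- A torsion-type tensor: a family `T_{ab}^c` of reals, skew-symmetric in the lower
indices. -/
def IsSkew (n : ℕ) (T : Fin n → Fin n → Fin n → ℝ) : Prop :=
  ∀ a b c, T a b c = - T b a c

/-- The left-hand side `Σ_{a<b, c} σ_{ab;i}^c(y)·T_{ab}^c` of the `i`-th compatibility
equation. -/
noncomputable def compatLHS (n : ℕ) (hn : 1 ≤ n) (T : Fin n → Fin n → Fin n → ℝ)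
    (i : Fin n) (y : Fin n → ℝ) : ℝ :=
  ∑ a : Fin n, ∑ b : Fin n, ∑ c : Fin n,
    if a < b then sigma n hn a b c i y * T a b c else 0


lemma key (n : ℕ) (hn : 1 ≤ n) (T : Fin n → Fin n → Fin n → ℝ)
    (i : Fin n) (y : Fin n → ℝ) :
    compatLHS n hn T i y =
      ∑ j : Fin n, ((if j < lastIdx n hn then T j (lastIdx n hn) i else 0)
        + (if i < lastIdx n hn then T i (lastIdx n hn) j else 0)
        + (if j < i then T j i (lastIdx n hn) else 0)
        + (if i < j then - T i j (lastIdx n hn) else 0)) * y j := by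
  set N := lastIdx n hn with hN
  have step : ∀ a b c : Fin n,
      (if a < b then sigma n hn a b c i y * T a b c else 0) =
        (if i = c then (if b = N then (if a < b then y a * T a b c else 0) else 0) else 0)
      + (if b = N then (if i = a then (if a < b then y c * T a b c else 0) else 0) else 0)
      + (if i = b then (if c = N then (if a < b then y a * T a b c else 0) else 0) else 0)
      + (if i = a then (if c = N then (if a < b then -(y b * T a b c) else 0) else 0) else 0) := by
    intro a b c
    unfold sigma
    rw [← hN]
    split_ifs <;> ring
  unfold compatLHS
  simp only [step, Finset.sum_add_distrib]
  simp [Finset.sum_ite_irrel, Finset.sum_ite_eq, Finset.sum_ite_eq', add_mul, ite_mul,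
    zero_mul, Finset.sum_add_distrib, mul_comm, neg_mul, mul_add, mul_ite, mul_zero, mul_neg]

lemma le_last (n : ℕ) (hn : 1 ≤ n) (x : Fin n) : x ≤ lastIdx n hn := by
  simp only [lastIdx, Fin.le_def]
  omega

theorem main_aux (n : ℕ) (_hn : 2 ≤ n) (h1 : 1 ≤ n)
    (T : Fin n → Fin n → Fin n → ℝ) (hT : IsSkew n T) (C : Fin n → Fin n → ℝ) :
    (∀ i : Fin n, ∀ y : Fin n → ℝ,
        compatLHS n h1 T i y = 2 * ∑ j : Fin n, C j i * y j) ↔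
      ((∀ i : Fin n, C (lastIdx n h1) i = 0) ∧
        (∀ a : Fin n, a < lastIdx n h1 →
          T a (lastIdx n h1) (lastIdx n h1) = C a (lastIdx n h1)) ∧
        (∀ a : Fin n, a < lastIdx n h1 →
          T a (lastIdx n h1) a = C a a) ∧
        (∀ a b : Fin n, a < b → b < lastIdx n h1 →
          T a b (lastIdx n h1) = C a b - C b a) ∧
        (∀ a c : Fin n, a < lastIdx n h1 → c < lastIdx n h1 → a ≠ c →
          T a (lastIdx n h1) c + T c (lastIdx n h1) a = C a c + C c a)) := by
  set N := lastIdx n h1 with hN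
  have hdiag : ∀ a c, T a a c = 0 := by
    intro a c
    have := hT a a c
    linarith
  have hmain : (∀ i : Fin n, ∀ y : Fin n → ℝ,
        compatLHS n h1 T i y = 2 * ∑ j : Fin n, C j i * y j) ↔
      (∀ i j : Fin n,
        ((if j < N then T j N i else 0) + (if i < N then T i N j else 0)
          + (if j < i then T j i N else 0) + (if i < j then - T i j N else 0))
          = 2 * C j i) := by
    constructor
    · intro h i j
      have := h i (Pi.single j 1)
      rw [key] at this
      simpa [Pi.single_apply, mul_ite, mul_one, mul_zero, Finset.sum_ite_eq,
        Finset.sum_ite_eq'] using this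
    · intro h i y
      rw [key, Finset.mul_sum]
      refine Finset.sum_congr rfl fun j _ => ?_
      rw [← hN, h i j]
      ring
  rw [hmain]
  have hnotlt : ∀ x : Fin n, ¬ N < x := fun x => not_lt.2 (le_last n h1 x)
  constructor
  · intro h
    refine ⟨?_, ?_, ?_, ?_, ?_⟩
    · -- C N i = 0
      intro i
      have := h i N
      rcases lt_or_eq_of_le (le_last n h1 i) with hi | hi
      · rw [← hN] at hi; simp [lt_irrefl, hnotlt, hi, not_lt.2 (le_of_lt hi)] at this
        linarith
      · rw [← hN] at hi; subst hi
        simp [lt_irrefl, hnotlt] at this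
        linarith
    · -- T a N N = C a N
      intro a ha
      have := h N a
      simp [ha, lt_irrefl, hnotlt] at this
      linarith
    · -- T a N a = C a a
      intro a ha
      have := h a a
      simp [ha, lt_irrefl] at this
      linarith
    · -- T a b N = C a b - C b a  for a < b < N
      intro a b hab hb
      have ha : a < N := lt_trans hab hb
      have h1' := h b a
      have h2' := h a b
      simp [ha, hb, hab, not_lt.2 (le_of_lt hab)] at h1' h2'
      have hTs := hT a b N
      linarith
    · -- T a N c + T c N a = C a c + C c a
      intro a c ha hc hac
      have h1' := h c a
      have h2' := h a c
      rcases lt_or_gt_of_ne hac with hlt | hgt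
      · simp [ha, hc, hlt, not_lt.2 (le_of_lt hlt)] at h1' h2'
        linarith
      · simp [ha, hc, hgt, not_lt.2 (le_of_lt hgt)] at h1' h2'
        linarith
  · rintro ⟨hC, hTn, hTd, hTab, hTsym⟩ i j
    rcases lt_or_eq_of_le (show j ≤ N from le_last n h1 j) with hj | hj
    · rcases lt_or_eq_of_le (show i ≤ N from le_last n h1 i) with hi | hi
      · rcases lt_trichotomy j i with hji | hji | hji
        · have e4 := hTab j i hji hi
          have e5 := hTsym j i hj hi (ne_of_lt hji)
          simp [hj, hi, hji, not_lt.2 (le_of_lt hji)]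
          linarith
        · subst hji
          have := hTd j hj
          simp [hj, lt_irrefl]
          linarith
        · have e4 := hTab i j hji hj
          have e5 := hTsym j i hj hi (ne_of_gt hji)
          simp [hj, hi, hji, not_lt.2 (le_of_lt hji)]
          linarith
      · subst hi
        have := hTn j hj
        simp [hj, lt_irrefl, hnotlt]
        linarith
    · subst hj
      have := hC i
      rcases lt_or_eq_of_le (le_last n h1 i) with hi | hi
      · rw [← hN] at hi; simp [lt_irrefl, hnotlt, hi, not_lt.2 (le_of_lt hi)]
        linarith
      · rw [← hN] at hi; subst hi
        simp [lt_irrefl, hnotlt]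
        linarith

/-- a torsion-type tensor `T` satisfies all `n` compatibility equations if
and only if: `C_{n;i} = 0` for all `i`; `T_{an}^n = C_{a;n}` for all `a < n`;
`T_{an}^a = C_{a;a}` for all `a < n`; `T_{ab}^n = C_{a;b} − C_{b;a}` for all `a < b < n`;
and `T_{an}^c + T_{cn}^a = C_{a;c} + C_{c;a}` for all `a ≠ c` with `a, c < n`. -/
theorem compatibility_characterization (n : ℕ) (hn : 2 ≤ n)
    (T : Fin n → Fin n → Fin n → ℝ) (hT : IsSkew n T) (C : Fin n → Fin n → ℝ) :
    (∀ i : Fin n, ∀ y : Fin n → ℝ,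
        compatLHS n (by omega) T i y = 2 * ∑ j : Fin n, C j i * y j) ↔
      ((∀ i : Fin n, C (lastIdx n (by omega)) i = 0) ∧
        (∀ a : Fin n, a < lastIdx n (by omega) →
          T a (lastIdx n (by omega)) (lastIdx n (by omega)) = C a (lastIdx n (by omega))) ∧
        (∀ a : Fin n, a < lastIdx n (by omega) →
          T a (lastIdx n (by omega)) a = C a a) ∧
        (∀ a b : Fin n, a < b → b < lastIdx n (by omega) →
          T a b (lastIdx n (by omega)) = C a b - C b a) ∧
        (∀ a c : Fin n, a < lastIdx n (by omega) → c < lastIdx n (by omega) → a ≠ c →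
          T a (lastIdx n (by omega)) c + T c (lastIdx n (by omega)) a = C a c + C c a)) :=
  main_aux n hn (by omega) T hT C
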